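/- Let (M,Q,l) be subextremal Reissner–Nordström–AdS parameters with two positive roots 0 < r_− < r_+ of Δ, and let α ∈ ℝ. Then: (i) there exist r_blue ∈ (r_−, r_+) and c > 0 such that (Ω²)'(r) ≥ c for all r ∈ [r_−, r_blue]; and (ii) there exist r_blue ∈ (r_−, r_+) and β > 0 (depending only on M, Q, l, α) such that for all r ∈ [r_−, r_blue]: β²·Ω²(r) + β·(Ω²)'(r) + (2β/r)·Ω²(r) − α/l² ≥ 1. (This is the positivity of the twisted potential 𝒱 = −(□f)/f − α/l² for the blue-shift twisting function f(r) = e^{βr}.) -/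

import Mathlib

lemma omega_val (M Q l r : ℝ) (hl : l ≠ 0) (hr : r ≠ 0) :
    -(1 - 2 * M / r + Q ^ 2 / r ^ 2 + r ^ 2 / l ^ 2)
      = (-(r ^ 2 * l ^ 2 - 2 * M * r * l ^ 2 + r ^ 4 + Q ^ 2 * l ^ 2))
        / (r ^ 2 * l ^ 2) := by
  field_simp
  ring

lemma omega_deriv (M Q l : ℝ) (r : ℝ) (hr : r ≠ 0) :
    deriv (fun s : ℝ => -(1 - 2 * M / s + Q ^ 2 / s ^ 2 + s ^ 2 / l ^ 2)) r
      = -(2 * M / r ^ 2 - 2 * Q ^ 2 / r ^ 3 + 2 * r / l ^ 2) := by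
  have hr2 : (r : ℝ) ^ 2 ≠ 0 := pow_ne_zero 2 hr
  have h1 : HasDerivAt (fun s : ℝ => 2 * M / s) ((0 * r - 2 * M * 1) / r ^ 2) r :=
    (hasDerivAt_const r (2 * M)).div (hasDerivAt_id r) hr
  have h2 : HasDerivAt (fun s : ℝ => Q ^ 2 / s ^ 2)
      ((0 * r ^ 2 - Q ^ 2 * ((2:ℕ) * r ^ (2 - 1))) / (r ^ 2) ^ 2) r :=
    (hasDerivAt_const r (Q ^ 2)).div (hasDerivAt_pow 2 r) hr2
  have h3 : HasDerivAt (fun s : ℝ => s ^ 2 / l ^ 2) (((2:ℕ) * r ^ (2 - 1)) / l ^ 2) r :=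
    (hasDerivAt_pow 2 r).div_const (l ^ 2)
  have h := ((((hasDerivAt_const r (1:ℝ)).sub h1).add h2).add h3).neg
  rw [show deriv (fun s : ℝ => -(1 - 2 * M / s + Q ^ 2 / s ^ 2 + s ^ 2 / l ^ 2)) r = _ from h.deriv]
  rcases eq_or_ne l 0 with hl | hl
  · subst hl; push_cast; simp; field_simp; ring
  · push_cast; field_simp; ring

set_option maxHeartbeats 1000000 in
/-- Near the Cauchy horizon `r₋`: (i) `(Ω²)' ≥ c > 0` on `[r₋, r_blue]` for some
`r_blue ∈ (r₋, r₊)`; (ii) positivity of the twisted potential for the blue-shift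
twisting function `f(r) = e^{βr}`: `β²Ω² + β(Ω²)' + (2β/r)Ω² − α/l² ≥ 1` on
`[r₋, r_blue]` for suitable `r_blue ∈ (r₋, r₊)` and `β > 0`. -/
theorem stmt10 (M Q l α : ℝ) (hM : 0 < M) (hl : 0 < l)
    (rm rp : ℝ) (hrm : 0 < rm) (hrmrp : rm < rp)
    (hΔm : rm ^ 2 - 2 * M * rm + rm ^ 4 / l ^ 2 + Q ^ 2 = 0)
    (hΔp : rp ^ 2 - 2 * M * rp + rp ^ 4 / l ^ 2 + Q ^ 2 = 0)
    (hroots : ∀ r : ℝ, 0 < r →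
      r ^ 2 - 2 * M * r + r ^ 4 / l ^ 2 + Q ^ 2 = 0 → r = rm ∨ r = rp) :
    (∃ rblue : ℝ, rm < rblue ∧ rblue < rp ∧ ∃ c : ℝ, 0 < c ∧
      ∀ r ∈ Set.Icc rm rblue,
        c ≤ deriv (fun s : ℝ =>
              -(1 - 2 * M / s + Q ^ 2 / s ^ 2 + s ^ 2 / l ^ 2)) r) ∧
    (∃ rblue : ℝ, rm < rblue ∧ rblue < rp ∧ ∃ β : ℝ, 0 < β ∧
      ∀ r ∈ Set.Icc rm rblue,
        1 ≤ β ^ 2 * (-(1 - 2 * M / r + Q ^ 2 / r ^ 2 + r ^ 2 / l ^ 2))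
            + β * deriv (fun s : ℝ =>
                -(1 - 2 * M / s + Q ^ 2 / s ^ 2 + s ^ 2 / l ^ 2)) r
            + (2 * β / r) * (-(1 - 2 * M / r + Q ^ 2 / r ^ 2 + r ^ 2 / l ^ 2))
            - α / l ^ 2) := by
  have hl2 : (0:ℝ) < l ^ 2 := by positivity
  have hl0 : l ^ 2 ≠ 0 := ne_of_gt hl2
  have hrp : 0 < rp := lt_trans hrm hrmrp
  have hm : rm ^ 2 * l ^ 2 - 2 * M * rm * l ^ 2 + rm ^ 4 + Q ^ 2 * l ^ 2 = 0 := by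
    field_simp at hΔm; linarith [hΔm]
  have hp : rp ^ 2 * l ^ 2 - 2 * M * rp * l ^ 2 + rp ^ 4 + Q ^ 2 * l ^ 2 = 0 := by
    field_simp at hΔp; linarith [hΔp]
  -- numerator of (Ω²)'(rm) is positive
  have hnum : 0 < 2 * Q ^ 2 * l ^ 2 - 2 * M * rm * l ^ 2 - 2 * rm ^ 4 := by
    have hsec : (rp - rm) * ((rp + rm) * l ^ 2 - 2 * M * l ^ 2
        + (rp ^ 3 + rp ^ 2 * rm + rp * rm ^ 2 + rm ^ 3)) = 0 := by
      linear_combination hp - hm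
    have hsum : (rp + rm) * l ^ 2 - 2 * M * l ^ 2
        + (rp ^ 3 + rp ^ 2 * rm + rp * rm ^ 2 + rm ^ 3) = 0 := by
      rcases mul_eq_zero.mp hsec with h | h
      · exact absurd h (by linarith)
      · exact h
    have hDp : 2 * rm * l ^ 2 - 2 * M * l ^ 2 + 4 * rm ^ 3 < 0 := by
      nlinarith [mul_pos (sub_pos.mpr hrmrp) hl2,
        mul_pos (sub_pos.mpr hrmrp) (mul_pos hrm hrm),
        mul_pos (sub_pos.mpr hrmrp) (mul_pos hrp hrp),
        mul_pos (sub_pos.mpr hrmrp) (mul_pos hrm hrp)]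
    nlinarith [mul_pos hrm (neg_pos.mpr hDp)]
  -- Δ ≤ 0 on [rm, rp]
  have hΔle : ∀ r : ℝ, rm ≤ r → r ≤ rp →
      r ^ 2 * l ^ 2 - 2 * M * r * l ^ 2 + r ^ 4 + Q ^ 2 * l ^ 2 ≤ 0 := by
    intro r h1 h2
    have hr : 0 < r := lt_of_lt_of_le hrm h1
    have hfac : (rp - rm) * (r ^ 2 * l ^ 2 - 2 * M * r * l ^ 2 + r ^ 4 + Q ^ 2 * l ^ 2)
        = (rp - r) * (rm ^ 2 * l ^ 2 - 2 * M * rm * l ^ 2 + rm ^ 4 + Q ^ 2 * l ^ 2)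
        + (r - rm) * (rp ^ 2 * l ^ 2 - 2 * M * rp * l ^ 2 + rp ^ 4 + Q ^ 2 * l ^ 2)
        - (r - rm) * (rp - r) * (rp - rm)
          * (l ^ 2 + r ^ 2 + (rm + rp) * r + rm ^ 2 + rm * rp + rp ^ 2) := by ring
    rw [hm, hp] at hfac
    have hQ : 0 ≤ l ^ 2 + r ^ 2 + (rm + rp) * r + rm ^ 2 + rm * rp + rp ^ 2 := by
      have := mul_pos (add_pos hrm hrp) hr
      have := mul_pos hrm hrp
      nlinarith [sq_nonneg l, sq_nonneg r, sq_nonneg rm, sq_nonneg rp]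
    have hposf : 0 ≤ (r - rm) * (rp - r) * (rp - rm)
        * (l ^ 2 + r ^ 2 + (rm + rp) * r + rm ^ 2 + rm * rp + rp ^ 2) :=
      mul_nonneg (mul_nonneg (mul_nonneg (sub_nonneg.mpr h1) (sub_nonneg.mpr h2))
        (by linarith)) hQ
    nlinarith [sub_pos.mpr hrmrp]
  -- the explicit derivative function
  obtain ⟨D, hD⟩ : ∃ D : ℝ → ℝ,
      D = fun r => -(2 * M / r ^ 2 - 2 * Q ^ 2 / r ^ 3 + 2 * r / l ^ 2) := ⟨_, rfl⟩
  have hDmval : D rm = (2 * Q ^ 2 * l ^ 2 - 2 * M * rm * l ^ 2 - 2 * rm ^ 4)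
      / (rm ^ 3 * l ^ 2) := by
    rw [hD]
    field_simp
    ring
  have hDmpos : 0 < D rm := by
    rw [hDmval]
    exact div_pos hnum (by positivity)
  obtain ⟨c, hc⟩ : ∃ c : ℝ, c = D rm / 2 := ⟨_, rfl⟩
  have hcpos : 0 < c := by rw [hc]; positivity
  have hcont : ContinuousAt D rm := by
    rw [hD]
    apply ContinuousAt.neg
    apply ContinuousAt.add
    apply ContinuousAt.sub
    · exact continuousAt_const.div (by fun_prop) (pow_ne_zero 2 hrm.ne')
    · exact continuousAt_const.div (by fun_prop) (pow_ne_zero 3 hrm.ne')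
    · exact (by fun_prop : ContinuousAt (fun r : ℝ => 2 * r) rm).div_const (l ^ 2)
  have hev : ∀ᶠ x in nhds rm, c < D x :=
    hcont.eventually (eventually_gt_nhds (by rw [hc]; linarith))
  obtain ⟨ε, hε, hball⟩ := Metric.eventually_nhds_iff.mp hev
  set rblue : ℝ := min (rm + ε / 2) ((rm + rp) / 2) with hrb
  have hb1 : rm < rblue := lt_min (by linarith) (by linarith)
  have hb2 : rblue < rp := lt_of_le_of_lt (min_le_right _ _) (by linarith)
  have hkey : ∀ r ∈ Set.Icc rm rblue, 0 < r ∧ c ≤ D r := by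
    intro r hr
    obtain ⟨h1, h2⟩ := hr
    refine ⟨lt_of_lt_of_le hrm h1, ?_⟩
    have hdist : dist r rm < ε := by
      rw [Real.dist_eq, abs_lt]
      constructor
      · linarith
      · have := le_trans h2 (min_le_left (rm + ε / 2) ((rm + rp) / 2))
        linarith
    exact (hball hdist).le
  constructor
  · refine ⟨rblue, hb1, hb2, c, hcpos, fun r hr => ?_⟩
    obtain ⟨hr0, hcd⟩ := hkey r hr
    rw [omega_deriv M Q l r hr0.ne']
    simp only [hD] at hcd
    exact hcd
  · refine ⟨rblue, hb1, hb2, (2 + |α| / l ^ 2) / c, div_pos (by positivity) hcpos, fun r hr => ?_⟩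
    obtain ⟨hr0, hcd⟩ := hkey r hr
    obtain ⟨β, hβ⟩ : ∃ β : ℝ, β = (2 + |α| / l ^ 2) / c := ⟨_, rfl⟩
    have hβpos : 0 < β := hβ ▸ div_pos (by positivity) hcpos
    have hβc : β * c = 2 + |α| / l ^ 2 := hβ ▸ div_mul_cancel₀ _ hcpos.ne'
    simp only [hD] at hcd
    rw [omega_deriv M Q l r hr0.ne', ← hβ]
    -- Ω² ≥ 0
    have hΩval := omega_val M Q l r hl.ne' hr0.ne'
    have hΩnn : 0 ≤ -(1 - 2 * M / r + Q ^ 2 / r ^ 2 + r ^ 2 / l ^ 2) := by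
      rw [hΩval]
      exact div_nonneg (neg_nonneg.mpr (hΔle r hr.1 (le_trans hr.2 hb2.le)))
        (by positivity)
    have ht1 : 0 ≤ β ^ 2 * (-(1 - 2 * M / r + Q ^ 2 / r ^ 2 + r ^ 2 / l ^ 2)) :=
      mul_nonneg (sq_nonneg β) hΩnn
    have ht2 : 0 ≤ (2 * β / r) * (-(1 - 2 * M / r + Q ^ 2 / r ^ 2 + r ^ 2 / l ^ 2)) :=
      mul_nonneg (div_nonneg (by linarith) hr0.le) hΩnn
    have ht3 : β * c ≤ β * (-(2 * M / r ^ 2 - 2 * Q ^ 2 / r ^ 3 + 2 * r / l ^ 2)) :=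
      mul_le_mul_of_nonneg_left hcd hβpos.le
    have ht4 : α / l ^ 2 ≤ |α| / l ^ 2 := (div_le_div_iff_of_pos_right hl2).mpr (le_abs_self α)
    linarith
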